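/- Let M = Π_{i=1}^{k} (ℓ·E + aᵢ·A(αᵢ)) where A(α) = [[cos α, −sin α],[−sin α, −cos α]] and E is the identity. Then Tr(M), as a polynomial in ℓ, has the form 2(ℓ^k + c₂ℓ^{k−2} + c₄ℓ^{k−4} + ⋯), i.e. all coefficients of ℓ^{k−j} with j odd vanish. -/

import Mathlib

open Matrix Polynomial

noncomputable def fmat (B : Matrix (Fin 2) (Fin 2) ℝ) : Matrix (Fin 2) (Fin 2) (Polynomial ℝ) :=
  (X : Polynomial ℝ) • (1 : Matrix (Fin 2) (Fin 2) (Polynomial ℝ)) + B.map C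

lemma fmat_natDegree_le (B : Matrix (Fin 2) (Fin 2) ℝ) (i j : Fin 2) :
    (fmat B i j).natDegree ≤ 1 := by
  fin_cases i <;> fin_cases j <;>
    simp [fmat, Matrix.add_apply, Matrix.smul_apply, Matrix.one_apply] <;>
    refine (natDegree_add_le _ _).trans ?_ <;> simp [natDegree_X_le]

lemma fmat_coeff_one (B : Matrix (Fin 2) (Fin 2) ℝ) (i j : Fin 2) :
    (fmat B i j).coeff 1 = if i = j then 1 else 0 := by
  fin_cases i <;> fin_cases j <;>
    simp [fmat, Matrix.add_apply, Matrix.smul_apply, Matrix.one_apply, coeff_C]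

lemma coeff_mul_top {p q : Polynomial ℝ} {n : ℕ} (hp : p.natDegree ≤ 1)
    (hq : q.natDegree ≤ n) : (p * q).coeff (n + 1) = p.coeff 1 * q.coeff n := by
  obtain ⟨b, c, rfl⟩ : ∃ b c, p = C b * X + C c := by
    refine ⟨p.coeff 1, p.coeff 0, ?_⟩
    exact (Polynomial.eq_X_add_C_of_natDegree_le_one hp)
  have h0 : q.coeff (n + 1) = 0 := coeff_eq_zero_of_natDegree_lt (lt_of_le_of_lt hq (Nat.lt_succ_self n))
  simp [add_mul, coeff_add, mul_assoc, coeff_C_mul, coeff_X_mul, h0, coeff_C]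

lemma prod_props (L : List (Matrix (Fin 2) (Fin 2) ℝ)) (i j : Fin 2) :
    ((L.map fmat).prod i j).natDegree ≤ L.length ∧
      ((L.map fmat).prod i j).coeff L.length = if i = j then 1 else 0 := by
  induction L generalizing i j with
  | nil => simp [Matrix.one_apply]; split <;> simp
  | cons B L ih =>
    simp only [List.map_cons, List.prod_cons, List.length_cons]
    have hmul : (fmat B * (L.map fmat).prod) i j
        = ∑ m : Fin 2, fmat B i m * (L.map fmat).prod m j := by
      simp [Matrix.mul_apply]
    constructor
    · rw [hmul]
      refine natDegree_sum_le_of_forall_le _ _ (fun m _ => ?_)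
      refine (natDegree_mul_le).trans ?_
      have := fmat_natDegree_le B i m
      have := (ih m j).1
      omega
    · rw [hmul, finset_sum_coeff]
      have : ∀ m : Fin 2, (fmat B i m * (L.map fmat).prod m j).coeff (L.length + 1)
          = (if i = m then 1 else 0) * (if m = j then 1 else 0) := by
        intro m
        rw [coeff_mul_top (fmat_natDegree_le B i m) (ih m j).1, fmat_coeff_one, (ih m j).2]
      rw [Finset.sum_congr rfl (fun m _ => this m)]
      fin_cases i <;> fin_cases j <;> simp [Fin.sum_univ_two]

noncomputable def σ : Polynomial ℝ →+* Polynomial ℝ := eval₂RingHom C (-X)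

lemma σ_coeff (p : Polynomial ℝ) (n : ℕ) : (σ p).coeff n = (-1) ^ n * p.coeff n := by
  induction p using Polynomial.induction_on' with
  | add p q hp hq => simp [map_add, coeff_add, hp, hq, mul_add]
  | monomial d c =>
    have : σ ((monomial d) c) = C c * (-X) ^ d := by
      simp [σ, eval₂_monomial]
    rw [this, neg_pow, coeff_monomial]
    rw [show C c * ((-1 : Polynomial ℝ) ^ d * X ^ d) = C ((-1:ℝ)^d) * (C c * X ^ d) by
      simp only [map_pow, map_neg, _root_.map_one]; ring]
    rw [coeff_C_mul, coeff_C_mul, coeff_X_pow]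
    rcases eq_or_ne d n with h | h
    · subst h; simp [mul_comm]
    · simp [h, Ne.symm h]

noncomputable def Jp : Matrix (Fin 2) (Fin 2) (Polynomial ℝ) := !![0, 1; -1, 0]
noncomputable def Jq : Matrix (Fin 2) (Fin 2) (Polynomial ℝ) := !![0, -1; 1, 0]

lemma JpJq : Jp * Jq = 1 := by
  simp [Jp, Jq]
  ext i j; fin_cases i <;> fin_cases j <;> simp [Matrix.mul_apply, Fin.sum_univ_two, Matrix.one_apply]

lemma JqJp : Jq * Jp = 1 := by
  simp [Jp, Jq]
  ext i j; fin_cases i <;> fin_cases j <;> simp [Matrix.mul_apply, Fin.sum_univ_two, Matrix.one_apply]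

noncomputable def Amat (x : ℝ) : Matrix (Fin 2) (Fin 2) ℝ :=
  !![Real.cos x, -Real.sin x; -Real.sin x, -Real.cos x]

lemma σ_fmat (b x : ℝ) :
    σ.mapMatrix (fmat (b • Amat x)) = (-1 : Polynomial ℝ) • (Jp * fmat (b • Amat x) * Jq) := by
  apply Matrix.ext
  intro i j
  fin_cases i <;> fin_cases j <;>
    simp [σ, fmat, Amat, Jp, Jq, Matrix.mul_apply, Fin.sum_univ_two, Matrix.one_apply,
      Matrix.smul_apply, Matrix.add_apply, Matrix.map_apply, Matrix.vecMul, Matrix.vecHead,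
      Matrix.vecTail, dotProduct] <;> ring

lemma σ_prod (Bs : List (Matrix (Fin 2) (Fin 2) ℝ))
    (h : ∀ B ∈ Bs, ∃ b x : ℝ, B = b • Amat x) :
    σ.mapMatrix ((Bs.map fmat).prod)
      = ((-1 : Polynomial ℝ) ^ Bs.length) • (Jp * (Bs.map fmat).prod * Jq) := by
  induction Bs with
  | nil => simp [JpJq]
  | cons B L ih =>
    obtain ⟨b, x, rfl⟩ := h B List.mem_cons_self
    simp only [List.map_cons, List.prod_cons, List.length_cons, _root_.map_mul]
    rw [ih (fun B hB => h B (List.mem_cons_of_mem _ hB)), σ_fmat]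
    rw [smul_mul_assoc, mul_smul_comm, smul_smul]
    have h2 : Jq * (Jp * ((List.map fmat L).prod * Jq)) = (List.map fmat L).prod * Jq := by
      rw [← Matrix.mul_assoc, JqJp, Matrix.one_mul]
    simp only [Matrix.mul_assoc, h2]
    congr 1
    rw [pow_succ]; ring

theorem stmt_15 (k : ℕ) (a α : Fin k → ℝ) :
    let M : Matrix (Fin 2) (Fin 2) (Polynomial ℝ) :=
      (List.ofFn (fun i : Fin k =>
        !![Polynomial.X + Polynomial.C (a i * Real.cos (α i)),
           Polynomial.C (-(a i * Real.sin (α i)));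
           Polynomial.C (-(a i * Real.sin (α i))),
           Polynomial.X - Polynomial.C (a i * Real.cos (α i))])).prod
    (Matrix.trace M).coeff k = 2 ∧
      ∀ j ≤ k, Odd j → (Matrix.trace M).coeff (k - j) = 0 := by
  intro M
  set L : List (Matrix (Fin 2) (Fin 2) ℝ) := List.ofFn (fun i : Fin k => a i • Amat (α i)) with hL
  have hlen : L.length = k := by simp [hL]
  have hmem : ∀ B ∈ L, ∃ b x : ℝ, B = b • Amat x := by
    intro B hB
    rw [hL, List.mem_ofFn] at hB
    obtain ⟨i, rfl⟩ := hB
    exact ⟨a i, α i, rfl⟩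
  have hM : M = (L.map fmat).prod := by
    show (List.ofFn _).prod = _
    congr 1
    rw [hL, List.map_ofFn]
    congr 1
    funext i
    ext r s
    fin_cases r <;> fin_cases s <;>
      simp [fmat, Amat, Matrix.smul_apply, Matrix.add_apply, Matrix.one_apply,
        Matrix.map_apply, sub_eq_add_neg] <;> ring_nf <;> simp [map_neg]
  have hcoeffk : ∀ i j : Fin 2, (M i j).coeff k = if i = j then 1 else 0 := by
    intro i j
    rw [hM, ← hlen]
    exact (prod_props _ i j).2
  have htr : Matrix.trace M = M 0 0 + M 1 1 := by
    simp [Matrix.trace, Matrix.diag, Fin.sum_univ_two]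
  constructor
  · rw [htr, coeff_add, hcoeffk 0 0, hcoeffk 1 1]
    norm_num
  · intro j hj hodd
    -- parity: σ (trace M) = (-1)^k * trace M
    have hσ : σ (Matrix.trace M) = (-1 : Polynomial ℝ) ^ k * Matrix.trace M := by
      have h1 : σ (Matrix.trace M) = Matrix.trace (σ.mapMatrix M) := by
        simp [Matrix.trace, Matrix.diag, Fin.sum_univ_two, RingHom.mapMatrix_apply,
          Matrix.map_apply, map_add]
      rw [h1, hM, σ_prod L hmem, hlen]
      rw [Matrix.trace_smul]
      rw [Matrix.trace_mul_cycle, JqJp, Matrix.one_mul]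
      simp [smul_eq_mul]
    have hc := congrArg (fun p => p.coeff (k - j)) hσ
    rw [σ_coeff] at hc
    have hC : ((-1 : Polynomial ℝ) ^ k * Matrix.trace M).coeff (k - j)
        = (-1 : ℝ) ^ k * (Matrix.trace M).coeff (k - j) := by
      have : ((-1 : Polynomial ℝ) ^ k) = C ((-1 : ℝ) ^ k) := by simp
      rw [this, coeff_C_mul]
    rw [hC] at hc
    have hk : (-1 : ℝ) ^ k = (-1 : ℝ) ^ (k - j) * (-1 : ℝ) ^ j := by
      rw [← pow_add]; congr 1; omega
    rw [hk, hodd.neg_one_pow] at hc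
    set c := (Matrix.trace M).coeff (k - j)
    have h2 : (-1 : ℝ) ^ (k - j) * c = (-1 : ℝ) ^ (k - j) * (-c) := by
      rw [hc]; ring
    have h3 : c = -c := by
      have := mul_left_cancel₀ (a := (-1 : ℝ) ^ (k - j)) (by positivity) h2
      exact this
    linarith
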